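/- Let H₀ be a symmetric n×n real matrix, let d⁰,…,d^{k−1}, y⁰,…,y^{k−1} ∈ ℝⁿ, and let γ₀,…,γ_{k−1} > 0. Define H_{j+1} := γ_j [ H_j + ((y^j − γ_j H_j d^j)(y^j − γ_j H_j d^j)ᵀ) / (γ_j ⟨y^j − γ_j H_j d^j, d^j⟩) ] for j = 0,…,k−1, and assume each update is well defined, i.e. ⟨y^j − γ_j H_j d^j, d^j⟩ ≠ 0 for all j < k. Set γ̄_j := ∏_{i<j} γ_i, q^j := y^j − γ̄_{j+1} H₀ d^j, let Q_j be the n×j matrix with columns q⁰,…,q^{j−1}, and define M₁ := (⟨q⁰, d⁰⟩) (a 1×1 matrix) and M_{j+1} := [[γ_j⁻¹ M_j, Q_jᵀ d^j], [(Q_jᵀ d^j)ᵀ, ⟨q^j, d^j⟩]] for 1 ≤ j ≤ k−1. Then M_k is invertible and H_k = γ̄_k H₀ + Q_k M_k⁻¹ Q_kᵀ. -/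

import Mathlib

open Matrix

private lemma aux_one_one_smul (c : ℝ) :
    (of fun _ _ => c : Matrix (Fin 1) (Fin 1) ℝ) = c • (1 : Matrix (Fin 1) (Fin 1) ℝ) := by
  ext a b
  have hab : a = b := Subsingleton.elim a b
  subst hab
  simp

private lemma aux_row_mat_col {j : ℕ} (u : Fin j → ℝ) (N : Matrix (Fin j) (Fin j) ℝ) :
    replicateRow (Fin 1) u * N * replicateCol (Fin 1) u = (u ⬝ᵥ (N *ᵥ u)) • (1 : Matrix (Fin 1) (Fin 1) ℝ) := by
  rw [Matrix.mul_assoc, ← Matrix.replicateCol_mulVec, Matrix.replicateRow_mul_replicateCol, aux_one_one_smul]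

private lemma aux_vecMulVec_sub {n : ℕ} (a b : Fin n → ℝ) :
    vecMulVec (a - b) (a - b) =
      vecMulVec a a - vecMulVec a b - vecMulVec b a + vecMulVec b b := by
  ext i i'
  simp [vecMulVec_apply]
  ring

theorem stmt15 {n : ℕ} (k : ℕ) (hk : 1 ≤ k)
    (H₀ : Matrix (Fin n) (Fin n) ℝ) (hH₀ : H₀.IsSymm)
    (d y : ℕ → Fin n → ℝ) (γ : ℕ → ℝ) (hγ : ∀ j < k, 0 < γ j)
    (H : ℕ → Matrix (Fin n) (Fin n) ℝ) (hH0 : H 0 = H₀)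
    (hwd : ∀ j < k, (y j - γ j • (H j *ᵥ d j)) ⬝ᵥ d j ≠ 0)
    (hHrec : ∀ j < k, H (j + 1) =
      γ j • (H j + (γ j * ((y j - γ j • (H j *ᵥ d j)) ⬝ᵥ d j))⁻¹ •
        vecMulVec (y j - γ j • (H j *ᵥ d j)) (y j - γ j • (H j *ᵥ d j))))
    (γb : ℕ → ℝ) (hγb : ∀ j, γb j = ∏ i ∈ Finset.range j, γ i)
    (qv : ℕ → Fin n → ℝ) (hqv : ∀ j, qv j = y j - γb (j + 1) • (H₀ *ᵥ d j))
    (Qmat : (j : ℕ) → Matrix (Fin n) (Fin j) ℝ)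
    (hQ : ∀ j, Qmat j = of fun i (l : Fin j) => qv l.1 i)
    (M : (j : ℕ) → Matrix (Fin j) (Fin j) ℝ)
    (hM1 : M 1 = of fun _ _ => qv 0 ⬝ᵥ d 0)
    (hMrec : ∀ j, 1 ≤ j → j + 1 ≤ k → M (j + 1) =
      (reindex finSumFinEquiv finSumFinEquiv)
        (fromBlocks ((γ j)⁻¹ • M j)
          (replicateCol (Fin 1) ((Qmat j)ᵀ *ᵥ d j))
          (replicateRow (Fin 1) ((Qmat j)ᵀ *ᵥ d j))
          (of fun _ _ => qv j ⬝ᵥ d j))) :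
    IsUnit (M k) ∧ H k = γb k • H₀ + Qmat k * (M k)⁻¹ * (Qmat k)ᵀ := by
  have key : ∀ j, 1 ≤ j → j ≤ k →
      (M j).IsSymm ∧ IsUnit (M j) ∧
      H j = γb j • H₀ + Qmat j * (M j)⁻¹ * (Qmat j)ᵀ := by
    intro j
    induction j with
    | zero => intro h; omega
    | succ j ih =>
      intro _ hjk
      rcases Nat.eq_zero_or_pos j with hj0 | hj1
      · subst hj0
        have h0k : 0 < k := hk
        have hγ0 : γ 0 ≠ 0 := (hγ 0 h0k).ne'
        have hγb1 : γb 1 = γ 0 := by rw [hγb 1, Finset.prod_range_one]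
        have hq0 : qv 0 = y 0 - γ 0 • (H 0 *ᵥ d 0) := by
          rw [hqv 0, hγb1, hH0]
        have hδ : qv 0 ⬝ᵥ d 0 ≠ 0 := by rw [hq0]; exact hwd 0 h0k
        have hM1' : M 1 = (qv 0 ⬝ᵥ d 0) • (1 : Matrix (Fin 1) (Fin 1) ℝ) := by
          rw [hM1, aux_one_one_smul]
        have hprod : M 1 * ((qv 0 ⬝ᵥ d 0)⁻¹ • (1 : Matrix (Fin 1) (Fin 1) ℝ)) = 1 := by
          rw [hM1', Matrix.smul_mul, Matrix.mul_smul, smul_smul, Matrix.one_mul,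
            mul_inv_cancel₀ hδ, one_smul]
        have hMinv : (M 1)⁻¹ = (qv 0 ⬝ᵥ d 0)⁻¹ • (1 : Matrix (Fin 1) (Fin 1) ℝ) :=
          Matrix.inv_eq_right_inv hprod
        refine ⟨?_, (Matrix.isUnit_iff_isUnit_det _).mpr (Matrix.isUnit_det_of_right_inverse hprod), ?_⟩
        · rw [Matrix.IsSymm, hM1', Matrix.transpose_smul, Matrix.transpose_one]
        · have hQQ : Qmat 1 * (Qmat 1)ᵀ = vecMulVec (qv 0) (qv 0) := by
            ext i i'
            simp [hQ, mul_apply, vecMulVec_apply]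
          have hH1 := hHrec 0 h0k
          rw [← hq0] at hH1
          rw [hH1, hMinv, hγb1, hH0, Matrix.mul_smul, Matrix.mul_one, Matrix.smul_mul, hQQ,
            smul_add, smul_smul]
          congr 2
          rw [mul_inv, ← mul_assoc, mul_inv_cancel₀ hγ0, one_mul]
      · obtain ⟨hsym, hunit, hHj⟩ := ih hj1 (by omega)
        have hjk' : j < k := by omega
        have hγj : γ j ≠ 0 := (hγ j hjk').ne'
        have hMr := hMrec j hj1 hjk
        have hHr := hHrec j hjk'
        have hwdj := hwd j hjk'
        have hdet : IsUnit (M j).det := (Matrix.isUnit_iff_isUnit_det _).mp hunit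
        set Minv := (M j)⁻¹ with hMinvdef
        have hMM : M j * Minv = 1 := Matrix.mul_nonsing_inv _ hdet
        have hMinvSymm : Minvᵀ = Minv := by
          rw [hMinvdef, Matrix.transpose_nonsing_inv, hsym]
        set u := (Qmat j)ᵀ *ᵥ d j with hu
        set v := Minv *ᵥ u with hv
        set A := (γ j)⁻¹ • M j with hA
        set Ai := γ j • Minv with hAi
        set cu := replicateCol (Fin 1) u with hcu
        set ru := replicateRow (Fin 1) u with hru
        set p := Qmat j *ᵥ (Ai *ᵥ u) with hp
        set w := qv j - p with hw
        set c := qv j ⬝ᵥ d j with hc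
        set δ := w ⬝ᵥ d j with hδdef
        set s := γ j * (u ⬝ᵥ v) with hs
        clear_value Minv u v A Ai cu ru p w c δ s
        have hγb1 : γb (j + 1) = γ j * γb j := by
          rw [hγb (j + 1), hγb j, Finset.prod_range_succ]; ring
        have hAiu : Ai *ᵥ u = γ j • v := by
          rw [hAi, Matrix.smul_mulVec, hv]
        have hpv : p = γ j • (Qmat j *ᵥ v) := by
          rw [hp, hAiu, Matrix.mulVec_smul]
        have hwEq : y j - γ j • (H j *ᵥ d j) = w := by
          have hHd : H j *ᵥ d j = γb j • (H₀ *ᵥ d j) + Qmat j *ᵥ v := by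
            rw [hHj, Matrix.add_mulVec, Matrix.smul_mulVec]
            congr 1
            rw [hv, hu, ← Matrix.mulVec_mulVec, ← Matrix.mulVec_mulVec]
          rw [hw, hpv, hqv j, hγb1, hHd, smul_add, smul_smul]
          abel
        have hδne : δ ≠ 0 := by
          rw [hδdef, ← hwEq]; exact hwdj
        have hcs : c = δ + s := by
          have h1 : (Qmat j *ᵥ v) ⬝ᵥ d j = u ⬝ᵥ v := by
            rw [dotProduct_comm, Matrix.dotProduct_mulVec, hu, ← Matrix.mulVec_transpose]
          rw [hδdef, hw, sub_dotProduct, hpv, smul_dotProduct, h1, ← hc, hs, smul_eq_mul]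
          ring
        have hAAi : A * Ai = 1 := by
          rw [hA, hAi, Matrix.smul_mul, Matrix.mul_smul, hMM, smul_smul,
            inv_mul_cancel₀ hγj, one_smul]
        have hAiT : Aiᵀ = Ai := by
          rw [hAi, Matrix.transpose_smul, hMinvSymm]
        have hAT : Aᵀ = A := by
          rw [hA, Matrix.transpose_smul, hsym]
        have hruAicu : ru * Ai * cu = s • (1 : Matrix (Fin 1) (Fin 1) ℝ) := by
          rw [hru, hcu, aux_row_mat_col, hAiu, dotProduct_smul, hs, smul_eq_mul]
        have hc0 : c * δ⁻¹ = 1 + δ⁻¹ * s := by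
          rw [hcs]; field_simp [hδne]
        have hc0' : δ⁻¹ * c = 1 + δ⁻¹ * s := by
          rw [hcs]; field_simp [hδne]
        set X : Matrix (Fin j ⊕ Fin 1) (Fin j ⊕ Fin 1) ℝ :=
          fromBlocks (Ai + δ⁻¹ • (Ai * cu * ru * Ai)) (-(δ⁻¹ • (Ai * cu)))
            (-(δ⁻¹ • (ru * Ai))) (δ⁻¹ • 1) with hX
        set B : Matrix (Fin j ⊕ Fin 1) (Fin j ⊕ Fin 1) ℝ :=
          fromBlocks A cu ru (of fun _ _ => c) with hB
        have hBX : B * X = 1 := by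
          rw [hB, hX, fromBlocks_multiply, aux_one_one_smul c, ← fromBlocks_one,
            fromBlocks_inj]
          refine ⟨?_, ?_, ?_, ?_⟩
          · rw [Matrix.mul_add, Matrix.mul_smul, Matrix.mul_neg, Matrix.mul_smul]
            simp only [← Matrix.mul_assoc]
            rw [hAAi, Matrix.one_mul]
            abel
          · rw [Matrix.mul_neg, Matrix.mul_smul, Matrix.mul_smul, Matrix.mul_one]
            simp only [← Matrix.mul_assoc]
            rw [hAAi, Matrix.one_mul]
            abel
          · rw [Matrix.mul_add, Matrix.mul_smul, Matrix.mul_neg, Matrix.mul_smul,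
              Matrix.smul_mul, Matrix.one_mul]
            simp only [← Matrix.mul_assoc]
            rw [hruAicu, Matrix.smul_mul, Matrix.one_mul, Matrix.smul_mul, smul_smul,
              smul_smul, hc0', add_smul, one_smul]
            abel
          · rw [Matrix.mul_neg, Matrix.mul_smul, Matrix.smul_mul, Matrix.one_mul, smul_smul]
            simp only [← Matrix.mul_assoc]
            rw [hruAicu, smul_smul, hc0, add_smul, one_smul]
            abel
        have hMsucc : M (j + 1) = B.submatrix finSumFinEquiv.symm finSumFinEquiv.symm := by
          rw [hMr, reindex_apply]
        have hBunit : IsUnit B := (Matrix.isUnit_iff_isUnit_det _).mpr (Matrix.isUnit_det_of_right_inverse hBX)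
        have hMunit : IsUnit (M (j + 1)) := by
          rw [Matrix.isUnit_iff_isUnit_det, hMsucc, Matrix.det_submatrix_equiv_self,
            ← Matrix.isUnit_iff_isUnit_det]
          exact hBunit
        have hMinvSucc : (M (j + 1))⁻¹ = X.submatrix finSumFinEquiv.symm finSumFinEquiv.symm := by
          apply Matrix.inv_eq_right_inv
          rw [hMsucc, Matrix.submatrix_mul_equiv, hBX, Matrix.submatrix_one_equiv]
        have hDT : ((of fun _ _ => c : Matrix (Fin 1) (Fin 1) ℝ))ᵀ = of fun _ _ => c := rfl
        have hMsymm : (M (j + 1)).IsSymm := by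
          rw [Matrix.IsSymm, hMsucc, Matrix.transpose_submatrix, hB,
            Matrix.fromBlocks_transpose, hAT, hDT, hcu, hru, Matrix.transpose_replicateCol,
            Matrix.transpose_replicateRow]
        set F := fromCols (Qmat j) (replicateCol (Fin 1) (qv j)) with hF
        have hQsucc : Qmat (j + 1) = F.submatrix id finSumFinEquiv.symm := by
          ext i l
          rw [hQ (j + 1)]
          show qv l.1 i = F i (finSumFinEquiv.symm l)
          rcases h : finSumFinEquiv.symm l with a | b
          · have h2 := congrArg finSumFinEquiv h
            rw [Equiv.apply_symm_apply, finSumFinEquiv_apply_left] at h2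
            have hl : (l : ℕ) = a := by rw [h2]; simp
            rw [hF]
            simp only [fromCols, of_apply, Sum.elim_inl, hQ j, hl]
          · have hb : (b : ℕ) = 0 := by omega
            have h2 := congrArg finSumFinEquiv h
            rw [Equiv.apply_symm_apply, finSumFinEquiv_apply_right] at h2
            have hl : (l : ℕ) = j := by rw [h2]; simp [hb]
            rw [hF]
            simp only [fromCols, of_apply, Sum.elim_inr, replicateCol_apply, hl]
        have hprod : Qmat (j + 1) * (M (j + 1))⁻¹ * (Qmat (j + 1))ᵀ = F * X * Fᵀ := by
          rw [hQsucc, hMinvSucc, Matrix.transpose_submatrix, Matrix.submatrix_mul_equiv,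
            Matrix.submatrix_mul_equiv, Matrix.submatrix_id_id]
        have hQAicu : Qmat j * Ai * cu = replicateCol (Fin 1) p := by
          rw [Matrix.mul_assoc, hcu, ← Matrix.replicateCol_mulVec, ← Matrix.replicateCol_mulVec, hp]
        have hruAiQ : ru * Ai * (Qmat j)ᵀ = replicateRow (Fin 1) p := by
          have h1 : ru * Ai * (Qmat j)ᵀ = (Qmat j * Ai * cu)ᵀ := by
            rw [Matrix.transpose_mul, Matrix.transpose_mul, hcu, Matrix.transpose_replicateCol, hAiT,
              Matrix.mul_assoc, hru]
          rw [h1, hQAicu, Matrix.transpose_replicateCol]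
        have hQAiQ : Qmat j * Ai * (Qmat j)ᵀ = γ j • (Qmat j * Minv * (Qmat j)ᵀ) := by
          rw [hAi, Matrix.mul_smul, Matrix.smul_mul]
        have hFXF : F * X * Fᵀ =
            γ j • (Qmat j * Minv * (Qmat j)ᵀ) + δ⁻¹ • vecMulVec w w := by
          rw [hF, hX, Matrix.transpose_fromCols, Matrix.transpose_replicateCol,
            fromCols_mul_fromBlocks, fromCols_mul_fromRows]
          have t11 : Qmat j * (Ai + δ⁻¹ • (Ai * cu * ru * Ai)) * (Qmat j)ᵀ =
              γ j • (Qmat j * Minv * (Qmat j)ᵀ) + δ⁻¹ • vecMulVec p p := by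
            rw [Matrix.mul_add, Matrix.mul_smul, Matrix.add_mul, Matrix.smul_mul, hQAiQ]
            congr 1
            simp only [← Matrix.mul_assoc]
            rw [hQAicu, Matrix.mul_assoc, Matrix.mul_assoc, ← Matrix.mul_assoc ru Ai,
              hruAiQ, vecMulVec_eq (Fin 1)]; rfl
          have t21 : replicateCol (Fin 1) (qv j) * (-(δ⁻¹ • (ru * Ai))) * (Qmat j)ᵀ =
              -(δ⁻¹ • vecMulVec (qv j) p) := by
            rw [Matrix.mul_neg, Matrix.neg_mul, Matrix.mul_smul, Matrix.smul_mul]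
            rw [Matrix.mul_assoc, hruAiQ, vecMulVec_eq (Fin 1)]; rfl
          have t12 : Qmat j * (-(δ⁻¹ • (Ai * cu))) * replicateRow (Fin 1) (qv j) =
              -(δ⁻¹ • vecMulVec p (qv j)) := by
            rw [Matrix.mul_neg, Matrix.neg_mul, Matrix.mul_smul, Matrix.smul_mul]
            rw [← Matrix.mul_assoc, hQAicu, vecMulVec_eq (Fin 1)]; rfl
          have t22 : replicateCol (Fin 1) (qv j) * (δ⁻¹ • (1 : Matrix (Fin 1) (Fin 1) ℝ)) *
              replicateRow (Fin 1) (qv j) = δ⁻¹ • vecMulVec (qv j) (qv j) := by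
            rw [Matrix.mul_smul, Matrix.mul_one, Matrix.smul_mul, vecMulVec_eq (Fin 1)]; rfl
          rw [Matrix.add_mul, Matrix.add_mul, t11, t21, t12, t22, hw, aux_vecMulVec_sub,
            smul_add, smul_sub, smul_sub]
          abel
        have hsc : γ j * (γ j * δ)⁻¹ = δ⁻¹ := by field_simp
        rw [hwEq, ← hδdef, hHj] at hHr
        have hHsucc : H (j + 1) = γb (j + 1) • H₀ + Qmat (j + 1) * (M (j + 1))⁻¹ *
            (Qmat (j + 1))ᵀ := by
          rw [hHr, hprod, hFXF, hγb1, smul_add, smul_add, smul_smul, smul_smul, hsc]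
          rw [mul_comm (γ j) (γb j)]
          abel
        exact ⟨hMsymm, hMunit, hHsucc⟩
  obtain ⟨_, h1, h2⟩ := key k hk le_rfl
  exact ⟨h1, h2⟩
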